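/- Let f be the standard skew-normal density f(z) = 2 φ(z) Φ(λ z). Then S[f] ≥ (1/2) ln(2π e) − ln(4e); i.e., the negentropy E[ln(2Φ(λ W))] is at most ln(4e), where W has density f. -/

import Mathlib

open MeasureTheory Real Set

noncomputable def phi (x : ℝ) : ℝ := (Real.sqrt (2 * Real.pi))⁻¹ * Real.exp (-x ^ 2 / 2)

noncomputable def Phi (x : ℝ) : ℝ := ∫ t in Set.Iic x, phi t

lemma phi_pos (x : ℝ) : 0 < phi x := by
  unfold phi
  positivity

lemma phi_eq (x : ℝ) : phi x = (Real.sqrt (2 * Real.pi))⁻¹ * Real.exp (-(2⁻¹) * x ^ 2) := by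
  unfold phi; ring_nf

lemma phi_neg (x : ℝ) : phi (-x) = phi x := by
  unfold phi; rw [neg_pow]; norm_num

lemma continuous_phi : Continuous phi := by
  unfold phi
  fun_prop

lemma integrable_phi : Integrable phi := by
  have : Integrable (fun x : ℝ => (Real.sqrt (2 * Real.pi))⁻¹ * Real.exp (-(2⁻¹) * x ^ 2)) :=
    (integrable_exp_neg_mul_sq (by norm_num)).const_mul _
  exact this.congr (ae_of_all _ fun x => (phi_eq x).symm)

lemma integral_phi : ∫ x, phi x = 1 := by
  have h := integral_gaussian (2⁻¹ : ℝ)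
  have h2 : (∫ x, phi x) = (Real.sqrt (2 * Real.pi))⁻¹ * ∫ x : ℝ, Real.exp (-(2⁻¹) * x ^ 2) := by
    rw [← integral_const_mul]
    exact integral_congr_ae (ae_of_all _ fun x => phi_eq x)
  rw [h2, h]
  rw [show (π / 2⁻¹ : ℝ) = 2 * π by ring]
  rw [inv_mul_cancel₀]
  positivity

lemma Phi_nonneg (x : ℝ) : 0 ≤ Phi x :=
  setIntegral_nonneg measurableSet_Iic fun t _ => (phi_pos t).le

lemma Phi_le_one (x : ℝ) : Phi x ≤ 1 := by
  rw [← integral_phi]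
  exact setIntegral_le_integral integrable_phi (ae_of_all _ fun t => (phi_pos t).le)

lemma Phi_mono : Monotone Phi := by
  intro a b hab
  exact setIntegral_mono_set integrable_phi.integrableOn
    (ae_of_all _ fun t => (phi_pos t).le) (HasSubset.Subset.eventuallyLE (Iic_subset_Iic.2 hab))

lemma measurable_Phi : Measurable Phi := Phi_mono.measurable

lemma Phi_add_neg (x : ℝ) : Phi x + Phi (-x) = 1 := by
  have h1 : Phi (-x) = ∫ t in Ioi x, phi t := by
    unfold Phi
    rw [show (∫ t in Iic (-x), phi t) = ∫ t in Iic (-x), phi (-t) from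
      integral_congr_ae (ae_of_all _ fun t => (phi_neg t).symm)]
    rw [integral_comp_neg_Iic, neg_neg]
  rw [h1, ← integral_phi]
  unfold Phi
  exact intervalIntegral.integral_Iic_add_Ioi integrable_phi.integrableOn integrable_phi.integrableOn

section Main

variable (lam : ℝ)

/-- The skew-normal density. -/
noncomputable def sknf (z : ℝ) : ℝ := 2 * phi z * Phi (lam * z)

lemma sknf_nonneg (z : ℝ) : 0 ≤ sknf lam z :=
  mul_nonneg (by linarith [phi_pos z]) (Phi_nonneg _)

lemma sknf_le (z : ℝ) : sknf lam z ≤ 2 * phi z := by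
  unfold sknf
  nlinarith [Phi_le_one (lam * z), Phi_nonneg (lam * z), phi_pos z]

lemma measurable_sknf : Measurable (sknf lam) := by
  unfold sknf
  exact (continuous_phi.measurable.const_mul 2).mul
    (measurable_Phi.comp (measurable_id.const_mul lam))

lemma integrable_sknf : Integrable (sknf lam) := by
  refine ((integrable_phi.const_mul 2).mono' (measurable_sknf lam).aestronglyMeasurable
    (ae_of_all _ fun z => ?_))
  rw [Real.norm_eq_abs, abs_of_nonneg (sknf_nonneg lam z)]
  exact sknf_le lam z

lemma integral_sknf : ∫ z, sknf lam z = 1 := by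
  have hneg : Integrable (fun z => sknf lam (-z)) := (integrable_sknf lam).comp_neg
  have h1 : ∫ z, sknf lam (-z) = ∫ z, sknf lam z := integral_neg_eq_self (sknf lam) volume
  have h2 : ∀ z, sknf lam z + sknf lam (-z) = 2 * phi z := by
    intro z
    have := Phi_add_neg (lam * z)
    unfold sknf
    rw [phi_neg, mul_neg]
    nlinarith [phi_pos z]
  have h3 : (∫ z, sknf lam z) + ∫ z, sknf lam (-z) = ∫ z, 2 * phi z := by
    rw [← integral_add (integrable_sknf lam) hneg]
    exact integral_congr_ae (ae_of_all _ h2)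
  rw [h1, integral_const_mul, integral_phi] at h3
  linarith

lemma integrable_sq_sknf : Integrable (fun z => z ^ 2 * sknf lam z) := by
  have hb : Integrable (fun z : ℝ => (8 * (Real.sqrt (2 * Real.pi))⁻¹) * Real.exp (-(4⁻¹) * z ^ 2)) :=
    (integrable_exp_neg_mul_sq (by norm_num)).const_mul _
  refine hb.mono' ((measurable_id.pow_const 2).mul (measurable_sknf lam)).aestronglyMeasurable
    (ae_of_all _ fun z => ?_)
  have h0 : 0 ≤ z ^ 2 * sknf lam z := mul_nonneg (sq_nonneg z) (sknf_nonneg lam z)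
  rw [Real.norm_eq_abs, abs_of_nonneg h0]
  have h1 : z ^ 2 * sknf lam z ≤ z ^ 2 * (2 * phi z) :=
    mul_le_mul_of_nonneg_left (sknf_le lam z) (sq_nonneg z)
  have h2 : z ^ 2 ≤ 4 * Real.exp (z ^ 2 / 4) := by
    have := Real.add_one_le_exp (z ^ 2 / 4)
    nlinarith [Real.exp_pos (z ^ 2 / 4)]
  have h3 : z ^ 2 * Real.exp (-z ^ 2 / 2) ≤ 4 * Real.exp (-(4⁻¹) * z ^ 2) := by
    calc z ^ 2 * Real.exp (-z ^ 2 / 2) ≤ 4 * Real.exp (z ^ 2 / 4) * Real.exp (-z ^ 2 / 2) :=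
          mul_le_mul_of_nonneg_right h2 (Real.exp_nonneg _)
      _ = 4 * Real.exp (z ^ 2 / 4 + -z ^ 2 / 2) := by rw [mul_assoc, ← Real.exp_add]
      _ = 4 * Real.exp (-(4⁻¹) * z ^ 2) := by ring_nf
  have hs : (0:ℝ) < (Real.sqrt (2 * Real.pi))⁻¹ := by positivity
  calc z ^ 2 * sknf lam z ≤ z ^ 2 * (2 * phi z) := h1
    _ = 2 * (Real.sqrt (2 * Real.pi))⁻¹ * (z ^ 2 * Real.exp (-z ^ 2 / 2)) := by
        unfold phi; ring
    _ ≤ 2 * (Real.sqrt (2 * Real.pi))⁻¹ * (4 * Real.exp (-(4⁻¹) * z ^ 2)) := by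
        exact mul_le_mul_of_nonneg_left h3 (by positivity)
    _ = 8 * (Real.sqrt (2 * Real.pi))⁻¹ * Real.exp (-(4⁻¹) * z ^ 2) := by ring

lemma integrable_sqrt_sknf : Integrable (fun z => Real.sqrt (sknf lam z)) := by
  have hb : Integrable (fun z : ℝ =>
      Real.sqrt (2 * (Real.sqrt (2 * Real.pi))⁻¹) * Real.exp (-(4⁻¹) * z ^ 2)) :=
    (integrable_exp_neg_mul_sq (by norm_num)).const_mul _
  refine hb.mono' (Real.continuous_sqrt.measurable.comp
    (measurable_sknf lam)).aestronglyMeasurable (ae_of_all _ fun z => ?_)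
  rw [Real.norm_eq_abs, abs_of_nonneg (Real.sqrt_nonneg _)]
  have h1 : sknf lam z ≤ 2 * (Real.sqrt (2 * Real.pi))⁻¹ * Real.exp (-z ^ 2 / 2) := by
    have := sknf_le lam z; unfold phi at this; linarith
  calc Real.sqrt (sknf lam z)
      ≤ Real.sqrt (2 * (Real.sqrt (2 * Real.pi))⁻¹ * Real.exp (-z ^ 2 / 2)) :=
        Real.sqrt_le_sqrt h1
    _ = Real.sqrt (2 * (Real.sqrt (2 * Real.pi))⁻¹) * Real.sqrt (Real.exp (-z ^ 2 / 2)) := by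
        rw [Real.sqrt_mul (by positivity)]
    _ = Real.sqrt (2 * (Real.sqrt (2 * Real.pi))⁻¹) * Real.exp (-(4⁻¹) * z ^ 2) := by
        rw [show Real.sqrt (Real.exp (-z ^ 2 / 2)) = Real.exp (-z ^ 2 / 2 / 2) from ?_]
        · ring_nf
        · rw [← Real.exp_half]

end Main

lemma log_two_phi (z : ℝ) :
    Real.log (2 * phi z) = Real.log (2 * (Real.sqrt (2 * Real.pi))⁻¹) + -z ^ 2 / 2 := by
  unfold phi
  rw [show 2 * ((Real.sqrt (2 * Real.pi))⁻¹ * Real.exp (-z ^ 2 / 2))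
      = 2 * (Real.sqrt (2 * Real.pi))⁻¹ * Real.exp (-z ^ 2 / 2) by ring]
  rw [Real.log_mul (by positivity) (Real.exp_ne_zero _), Real.log_exp]

lemma integrable_sknf_log2phi (lam : ℝ) :
    Integrable (fun z => sknf lam z * Real.log (2 * phi z)) := by
  have h : Integrable (fun z => Real.log (2 * (Real.sqrt (2 * Real.pi))⁻¹) * sknf lam z
      - (1/2) * (z ^ 2 * sknf lam z)) :=
    ((integrable_sknf lam).const_mul _).sub ((integrable_sq_sknf lam).const_mul _)
  refine h.congr (ae_of_all _ fun z => ?_)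
  dsimp only
  rw [log_two_phi]
  ring

lemma integral_sknf_log2phi_le (lam : ℝ) :
    ∫ z, sknf lam z * Real.log (2 * phi z) ≤ Real.log (2 * (Real.sqrt (2 * Real.pi))⁻¹) := by
  have heq : ∫ z, sknf lam z * Real.log (2 * phi z)
      = Real.log (2 * (Real.sqrt (2 * Real.pi))⁻¹) * (∫ z, sknf lam z)
        - (1/2) * ∫ z, z ^ 2 * sknf lam z := by
    rw [← integral_const_mul, ← integral_const_mul, ← integral_sub
      ((integrable_sknf lam).const_mul _) ((integrable_sq_sknf lam).const_mul _)]
    refine integral_congr_ae (ae_of_all _ fun z => ?_)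
    dsimp only
    rw [log_two_phi]
    ring
  have hnn : 0 ≤ ∫ z, z ^ 2 * sknf lam z :=
    integral_nonneg fun z => mul_nonneg (sq_nonneg z) (sknf_nonneg lam z)
  rw [heq, integral_sknf]
  linarith

lemma mul_log_ge_neg_two_sqrt {x : ℝ} (hx : 0 ≤ x) : -2 * Real.sqrt x ≤ x * Real.log x := by
  rcases eq_or_lt_of_le hx with h | h
  · simp [← h]
  · have hs : 0 < Real.sqrt x := Real.sqrt_pos.2 h
    have hinv : Real.log (Real.sqrt x)⁻¹ ≤ (Real.sqrt x)⁻¹ - 1 :=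
      Real.log_le_sub_one_of_pos (by positivity)
    rw [Real.log_inv] at hinv
    have hlog : Real.log x = 2 * Real.log (Real.sqrt x) := by
      rw [Real.log_sqrt hx]; ring
    have hxs : Real.sqrt x * Real.sqrt x = x := Real.mul_self_sqrt hx
    have h1 : 1 - (Real.sqrt x)⁻¹ ≤ Real.log (Real.sqrt x) := by linarith
    have h2 : x * (1 - (Real.sqrt x)⁻¹) ≤ x * Real.log (Real.sqrt x) :=
      mul_le_mul_of_nonneg_left h1 hx
    have h3 : x * (Real.sqrt x)⁻¹ = Real.sqrt x := by
      field_simp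
      rw [sq, hxs]
    nlinarith

lemma integrable_sknf_log_sknf (lam : ℝ) :
    Integrable (fun z => sknf lam z * Real.log (sknf lam z)) := by
  have hb : Integrable (fun z => 2 * Real.sqrt (sknf lam z)
      + |sknf lam z * Real.log (2 * phi z)|) :=
    ((integrable_sqrt_sknf lam).const_mul 2).add (integrable_sknf_log2phi lam).abs
  refine hb.mono' ((measurable_sknf lam).mul
    (Real.measurable_log.comp (measurable_sknf lam))).aestronglyMeasurable
    (ae_of_all _ fun z => ?_)
  rw [Real.norm_eq_abs, abs_le]
  have hup : sknf lam z * Real.log (sknf lam z) ≤ sknf lam z * Real.log (2 * phi z) := by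
    rcases eq_or_lt_of_le (sknf_nonneg lam z) with h | h
    · simp [← h]
    · exact mul_le_mul_of_nonneg_left
        (Real.log_le_log h (sknf_le lam z)) (sknf_nonneg lam z)
  constructor
  · have := mul_log_ge_neg_two_sqrt (sknf_nonneg lam z)
    have habs : 0 ≤ |sknf lam z * Real.log (2 * phi z)| := abs_nonneg _
    linarith
  · have habs : sknf lam z * Real.log (2 * phi z) ≤ |sknf lam z * Real.log (2 * phi z)| :=
      le_abs_self _
    have hsq : 0 ≤ Real.sqrt (sknf lam z) := Real.sqrt_nonneg _
    linarith

lemma log_const_eval : Real.log (2 * (Real.sqrt (2 * Real.pi))⁻¹)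
    = Real.log 2 - (1/2) * Real.log (2 * Real.pi) := by
  rw [Real.log_mul (by norm_num) (by positivity), Real.log_inv, Real.log_sqrt (by positivity)]
  ring

/-- Lower bound for the skew-normal Shannon entropy:
    S[f] ≥ (1/2) ln(2π e) − ln(4e), i.e. the negentropy E[ln(2Φ(λW))] is at most
    ln(4e), where W has the standard skew-normal density f(z) = 2 φ(z) Φ(λ z). -/
theorem skew_normal_entropy_lower_bound (lam : ℝ) :
    (1 / 2) * Real.log (2 * Real.pi * Real.exp 1) - Real.log (4 * Real.exp 1) ≤
        -∫ z : ℝ, (2 * phi z * Phi (lam * z)) * Real.log (2 * phi z * Phi (lam * z)) ∧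
      ∫ w : ℝ, Real.log (2 * Phi (lam * w)) * (2 * phi w * Phi (lam * w)) ≤
        Real.log (4 * Real.exp 1) := by
  have hlog24 : Real.log 2 ≤ Real.log 4 := Real.log_le_log (by norm_num) (by norm_num)
  have hlog2 : 0 ≤ Real.log 2 := Real.log_nonneg (by norm_num)
  have hlog4e : Real.log (4 * Real.exp 1) = Real.log 4 + 1 := by
    rw [Real.log_mul (by norm_num) (Real.exp_ne_zero 1), Real.log_exp]
  constructor
  · have hkey : (∫ z, sknf lam z * Real.log (sknf lam z))
        ≤ Real.log (2 * (Real.sqrt (2 * Real.pi))⁻¹) := by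
      refine le_trans (integral_mono (integrable_sknf_log_sknf lam)
        (integrable_sknf_log2phi lam) fun z => ?_) (integral_sknf_log2phi_le lam)
      rcases eq_or_lt_of_le (sknf_nonneg lam z) with h | h
      · simp [← h]
      · exact mul_le_mul_of_nonneg_left
          (Real.log_le_log h (sknf_le lam z)) (sknf_nonneg lam z)
    have heq : (∫ z : ℝ, (2 * phi z * Phi (lam * z)) * Real.log (2 * phi z * Phi (lam * z)))
        = ∫ z, sknf lam z * Real.log (sknf lam z) := rfl
    rw [log_const_eval] at hkey
    rw [heq, hlog4e, Real.log_mul (by positivity) (Real.exp_ne_zero 1), Real.log_exp]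
    linarith
  · have heq : (∫ w : ℝ, Real.log (2 * Phi (lam * w)) * (2 * phi w * Phi (lam * w)))
        = ∫ w, Real.log (2 * Phi (lam * w)) * sknf lam w := rfl
    rw [heq, hlog4e]
    by_cases hi : Integrable (fun w => Real.log (2 * Phi (lam * w)) * sknf lam w)
    · have hmono : (∫ w, Real.log (2 * Phi (lam * w)) * sknf lam w)
          ≤ ∫ w, Real.log 2 * sknf lam w := by
        refine integral_mono hi ((integrable_sknf lam).const_mul _) fun w => ?_
        have h2 : 2 * Phi (lam * w) ≤ 2 := by linarith [Phi_le_one (lam * w)]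
        have h0 : 0 ≤ 2 * Phi (lam * w) := by linarith [Phi_nonneg (lam * w)]
        have hle : Real.log (2 * Phi (lam * w)) ≤ Real.log 2 := by
          rcases eq_or_lt_of_le h0 with h | h
          · rw [← h, Real.log_zero]; exact hlog2
          · exact Real.log_le_log h h2
        exact mul_le_mul_of_nonneg_right hle (sknf_nonneg lam w)
      rw [integral_const_mul, integral_sknf, mul_one] at hmono
      linarith
    · rw [integral_undef hi]
      linarith
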